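/- arXiv:2403.01906 — 2 statements merged into one kernel-verified Lean document; each statement's English description precedes it below -/
import Mathlib

section
/- For every angle φ ∈ ℝ, let R_φ : ℝ³ → ℝ³ be the map fixing the first component and rotating the last two components by angle φ, i.e. R_φ(v₀,v₁,v₂) = (v₀, v₁ cos φ − v₂ sin φ, v₁ sin φ + v₂ cos φ). Then for every v ∈ ℝ³, Ψ(R_φ v) = R_φ Ψ(v). -/
open MeasureTheory Real Set Filter



lemma strip_translate (H : ℝ × ℝ → ℝ) (c s t : ℝ) :
    ∫ x in Ici (0:ℝ) ×ˢ Ico s t, H (x.1, x.2 + c) =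
      ∫ x in Ici (0:ℝ) ×ˢ Ico (s + c) (t + c), H x := by
  have hT : MeasurePreserving (fun x : ℝ × ℝ => (x.1, x.2 + c)) volume volume := by
    rw [Measure.volume_eq_prod]
    exact (MeasurePreserving.id volume).prod (measurePreserving_add_right volume c)
  have hE : MeasurableEmbedding (fun x : ℝ × ℝ => (x.1, x.2 + c)) :=
    MeasurableEmbedding.id.prodMap (MeasurableEquiv.addRight c).measurableEmbedding
  have key := hT.setIntegral_preimage_emb hE H (Ici (0:ℝ) ×ˢ Ico (s + c) (t + c))
  have hset : (fun x : ℝ × ℝ => (x.1, x.2 + c)) ⁻¹' (Ici (0:ℝ) ×ˢ Ico (s + c) (t + c))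
      = Ici (0:ℝ) ×ˢ Ico s t := by
    ext x
    simp only [Set.mem_preimage, Set.mem_prod, Set.mem_Ici, Set.mem_Ico]
    constructor
    · rintro ⟨h1, h2, h3⟩; exact ⟨h1, by linarith, by linarith⟩
    · rintro ⟨h1, h2, h3⟩; exact ⟨h1, by linarith, by linarith⟩
  rw [hset] at key
  exact key

lemma strip_step (H : ℝ × ℝ → ℝ) (hper : ∀ r θ, H (r, θ + π) = H (r, θ)) (s t : ℝ) :
    ∫ x in Ici (0:ℝ) ×ˢ Ico s t, H x =
      ∫ x in Ici (0:ℝ) ×ˢ Ico (s + π) (t + π), H x := by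
  have := strip_translate H π s t
  simp only [hper] at this
  exact this

lemma strip_split (H : ℝ × ℝ → ℝ) (s m t : ℝ) (hsm : s ≤ m) (hmt : m ≤ t)
    (h1 : IntegrableOn H (Ici (0:ℝ) ×ˢ Ico s m) volume)
    (h2 : IntegrableOn H (Ici (0:ℝ) ×ˢ Ico m t) volume) :
    ∫ x in Ici (0:ℝ) ×ˢ Ico s t, H x =
      (∫ x in Ici (0:ℝ) ×ˢ Ico s m, H x) + ∫ x in Ici (0:ℝ) ×ˢ Ico m t, H x := by
  have hu : Ico s t = Ico s m ∪ Ico m t := (Ico_union_Ico_eq_Ico hsm hmt).symm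
  rw [hu, Set.prod_union]
  refine setIntegral_union ?_ (measurableSet_Ici.prod measurableSet_Ico) h1 h2
  rw [Set.disjoint_left]
  rintro x ⟨-, hx1⟩ ⟨-, hx2⟩
  exact absurd hx2.1 (not_le.2 hx1.2)

lemma strip_adjacent (H : ℝ × ℝ → ℝ) (hper : ∀ r θ, H (r, θ + π) = H (r, θ))
    (hint : ∀ s t : ℝ, IntegrableOn H (Ici (0:ℝ) ×ˢ Ico s t) volume)
    (s d : ℝ) (hd0 : 0 ≤ d) (hdπ : d ≤ π) :
    ∫ x in Ici (0:ℝ) ×ˢ Ico s (s + π), H x =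
      ∫ x in Ici (0:ℝ) ×ˢ Ico (s + d) (s + d + π), H x := by
  have e1 := strip_split H s (s + d) (s + π) (by linarith) (by linarith) (hint _ _) (hint _ _)
  have e2 := strip_split H (s + d) (s + π) (s + d + π) (by linarith) (by linarith)
    (hint _ _) (hint _ _)
  have e3 := strip_step H hper s (s + d)
  rw [e1, e2, ← e3]
  ring

lemma strip_nat (H : ℝ × ℝ → ℝ) (hper : ∀ r θ, H (r, θ + π) = H (r, θ)) (s : ℝ) (n : ℕ) :
    ∫ x in Ici (0:ℝ) ×ˢ Ico s (s + π), H x =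
      ∫ x in Ici (0:ℝ) ×ˢ Ico (s + n * π) (s + n * π + π), H x := by
  induction n with
  | zero => norm_num
  | succ k ih =>
    rw [ih, strip_step H hper (s + k * π) (s + k * π + π)]
    congr 2 <;> push_cast <;> ring

lemma strip_const (H : ℝ × ℝ → ℝ) (hper : ∀ r θ, H (r, θ + π) = H (r, θ))
    (hint : ∀ s t : ℝ, IntegrableOn H (Ici (0:ℝ) ×ˢ Ico s t) volume) (s t : ℝ) :
    ∫ x in Ici (0:ℝ) ×ˢ Ico s (s + π), H x =
      ∫ x in Ici (0:ℝ) ×ˢ Ico t (t + π), H x := by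
  have main : ∀ s t : ℝ, s ≤ t →
      (∫ x in Ici (0:ℝ) ×ˢ Ico s (s + π), H x)
        = ∫ x in Ici (0:ℝ) ×ˢ Ico t (t + π), H x := by
    intro s t hst
    set n : ℕ := ⌊(t - s) / π⌋₊ with hn
    have hπ : (0:ℝ) < π := Real.pi_pos
    set d : ℝ := t - s - n * π with hdd
    have hfl : (n : ℝ) ≤ (t - s) / π := Nat.floor_le (div_nonneg (by linarith) hπ.le)
    have hfl' : (n : ℝ) * π ≤ t - s := (le_div_iff₀ hπ).mp hfl
    have hfu : (t - s) / π < n + 1 := Nat.lt_floor_add_one _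
    have hfu' : t - s < (n + 1) * π := by
      have := (div_lt_iff₀ hπ).mp hfu
      linarith
    have hd0 : 0 ≤ d := by simp only [hdd]; linarith
    have hdπ : d ≤ π := by simp only [hdd]; nlinarith
    have ht : s + n * π + d = t := by simp only [hdd]; ring
    calc ∫ x in Ici (0:ℝ) ×ˢ Ico s (s + π), H x
        = ∫ x in Ici (0:ℝ) ×ˢ Ico (s + n * π) (s + n * π + π), H x := strip_nat H hper s n
      _ = ∫ x in Ici (0:ℝ) ×ˢ Ico (s + n * π + d) (s + n * π + d + π), H x :=
          strip_adjacent H hper hint (s + n * π) d hd0 hdπ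
      _ = ∫ x in Ici (0:ℝ) ×ˢ Ico t (t + π), H x := by rw [ht]
  rcases le_total s t with h | h
  · exact main s t h
  · exact (main t s h).symm


lemma strip_integrable (g : ℝ × ℝ → ℝ) (hg : Continuous g) (C : ℝ)
    (hbound : ∀ x : ℝ × ℝ, |g x| ≤ C * (1 + |x.1|))
    (P : ℝ → ℝ) (hP0 : ∀ r, 0 ≤ P r) (hPsupp : HasCompactSupport P)
    (hPi : IntegrableOn P (Ici (0:ℝ)) volume) (s t : ℝ) :
    IntegrableOn (fun x : ℝ × ℝ => g x * P x.1 / π) (Ici (0:ℝ) ×ˢ Ico s t) volume := by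
  have hC : 0 ≤ C := by
    have := hbound (0, 0)
    simp at this
    exact (abs_nonneg _).trans this
  obtain ⟨M, hM⟩ : ∃ M : ℝ, ∀ r : ℝ, M < |r| → P r = 0 := by
    obtain ⟨M, hM⟩ := hPsupp.isBounded.subset_closedBall 0
    refine ⟨M, fun r hr => ?_⟩
    by_contra h
    have : r ∈ tsupport P := subset_tsupport P (by simpa using h)
    have := hM this
    simp [Metric.mem_closedBall, Real.dist_eq] at this
    linarith
  set M' : ℝ := max M 0 with hM'
  -- rewrite restricted measure as product
  have hmeas : volume.restrict (Ici (0:ℝ) ×ˢ Ico s t)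
      = (volume.restrict (Ici (0:ℝ))).prod (volume.restrict (Ico s t)) := by
    rw [Measure.volume_eq_prod, Measure.prod_restrict]
  rw [IntegrableOn, hmeas]
  -- P ∘ fst is integrable wrt product
  have hPasm : AEStronglyMeasurable P (volume.restrict (Ici (0:ℝ))) := hPi.aestronglyMeasurable
  have hPfst : AEStronglyMeasurable (fun x : ℝ × ℝ => P x.1)
      ((volume.restrict (Ici (0:ℝ))).prod (volume.restrict (Ico s t))) := hPasm.comp_fst
  have hmap : Measure.map Prod.fst ((volume.restrict (Ici (0:ℝ))).prod (volume.restrict (Ico s t)))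
      = (volume.restrict (Ico s t)) univ • volume.restrict (Ici (0:ℝ)) :=
    Measure.map_fst_prod
  have hPsmul : Integrable P ((volume.restrict (Ico s t)) univ • volume.restrict (Ici (0:ℝ))) := by
    refine Integrable.smul_measure hPi ?_
    simp [Real.volume_Ico]
  have hPprod : Integrable (fun x : ℝ × ℝ => P x.1)
      ((volume.restrict (Ici (0:ℝ))).prod (volume.restrict (Ico s t))) := by
    have := (integrable_map_measure (by rw [hmap]; exact hPsmul.aestronglyMeasurable)
      measurable_fst.aemeasurable).mp (by rw [hmap]; exact hPsmul)
    exact this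
  -- dominate
  refine Integrable.mono' (hPprod.const_mul (C * (1 + M') / π)) ?_ ?_
  · simpa [div_eq_mul_inv, Pi.mul_def] using
      ((hg.aestronglyMeasurable.mul hPfst).mul aestronglyMeasurable_const)
  · rw [← hmeas]
    filter_upwards [ae_restrict_mem ((measurableSet_Ici).prod measurableSet_Ico)] with x hx
    obtain ⟨hx1, -⟩ := hx
    have hx1' : (0:ℝ) ≤ x.1 := hx1
    have hπ : (0:ℝ) < π := Real.pi_pos
    rw [norm_eq_abs, abs_div, abs_of_pos hπ, abs_mul]
    rcases le_or_gt x.1 M' with h | h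
    · have h1 : |g x| * |P x.1| ≤ C * (1 + M') * P x.1 := by
        rw [abs_of_nonneg (hP0 x.1)]
        have := hbound x
        have h2 : |x.1| ≤ M' := by rw [abs_of_nonneg hx1']; exact h
        have t1 : |g x| * P x.1 ≤ C * (1 + |x.1|) * P x.1 :=
          mul_le_mul_of_nonneg_right this (hP0 x.1)
        have t2 : C * (1 + |x.1|) * P x.1 ≤ C * (1 + M') * P x.1 := by
          nlinarith [mul_nonneg (mul_nonneg hC (sub_nonneg.2 h2)) (hP0 x.1)]
        linarith
      calc |g x| * |P x.1| / π ≤ C * (1 + M') * P x.1 / π := by gcongr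
        _ = C * (1 + M') / π * P x.1 := by ring
    · have hP : P x.1 = 0 := hM x.1 (by rw [abs_of_nonneg hx1']; exact lt_of_le_of_lt (le_max_left M 0) h)
      simp [hP]


/-- The neuronal activity profile `V(r,θ,v) = v₀ + r v₁ cos(2θ) + r v₂ sin(2θ)`. -/
noncomputable def Vact (v : ℝ × ℝ × ℝ) (r θ : ℝ) : ℝ :=
  v.1 + r * v.2.1 * Real.cos (2 * θ) + r * v.2.2 * Real.sin (2 * θ)

/-- The nonlinear part `Ψ` of the reduced dynamics. -/
noncomputable def Psi (σ P : ℝ → ℝ) (J0 J1 : ℝ) (v : ℝ × ℝ × ℝ) : ℝ × ℝ × ℝ :=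
  (J0 * ∫ x in (Set.Ici (0:ℝ)) ×ˢ (Set.Ico (-(π/2)) (π/2)),
      σ (Vact v x.1 x.2) * P x.1 / π,
   J1 * ∫ x in (Set.Ici (0:ℝ)) ×ˢ (Set.Ico (-(π/2)) (π/2)),
      x.1 * Real.cos (2 * x.2) * σ (Vact v x.1 x.2) * P x.1 / π,
   J1 * ∫ x in (Set.Ici (0:ℝ)) ×ˢ (Set.Ico (-(π/2)) (π/2)),
      x.1 * Real.sin (2 * x.2) * σ (Vact v x.1 x.2) * P x.1 / π)

/-- Rotation by angle `φ` acting on the last two components of `ℝ³`. -/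
noncomputable def Rot (φ : ℝ) (v : ℝ × ℝ × ℝ) : ℝ × ℝ × ℝ :=
  (v.1, v.2.1 * Real.cos φ - v.2.2 * Real.sin φ, v.2.1 * Real.sin φ + v.2.2 * Real.cos φ)

/-- `Ψ(R_φ v) = R_φ Ψ(v)` for every angle `φ` and every `v ∈ ℝ³`. -/
theorem psi_equivariant
    (σ P : ℝ → ℝ) (J0 J1 : ℝ) (hJ0 : J0 ≠ 0) (hJ1 : 0 < J1)
    (hσ : ContDiff ℝ (⊤ : ℕ∞) σ)
    (hodd : ∀ x, σ (-x) = -σ x)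
    (hpos : ∀ x, 0 < deriv σ x)
    (hcc : ∀ x, x * iteratedDeriv 2 σ x ≤ 0)
    (hσ0 : σ 0 = 0)
    (hbot : Tendsto σ atBot (nhds (-1)))
    (htop : Tendsto σ atTop (nhds 1))
    (hmax : ∀ x, deriv σ x ≤ deriv σ 0)
    (hP0 : ∀ r, 0 ≤ P r)
    (hPsupp : HasCompactSupport P)
    (hPint : ∫ r in Set.Ici (0:ℝ), P r = 1)
    (φ : ℝ) (v : ℝ × ℝ × ℝ) :
    Psi σ P J0 J1 (Rot φ v) = Rot φ (Psi σ P J0 J1 v) := by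
  have hπ : (0:ℝ) < π := Real.pi_pos
  -- |σ| ≤ 1
  have hmono : Monotone σ := (strictMono_of_deriv_pos hpos).monotone
  have hσ1 : ∀ y, |σ y| ≤ 1 := by
    intro y
    rw [abs_le]
    constructor
    · exact le_of_tendsto hbot (eventually_atBot.2 ⟨y, fun z hz => hmono hz⟩)
    · exact ge_of_tendsto htop (eventually_atTop.2 ⟨y, fun z hz => hmono hz⟩)
  -- P is integrable on [0,∞)
  have hPi : IntegrableOn P (Ici (0:ℝ)) volume := by
    by_contra h
    rw [MeasureTheory.integral_undef h] at hPint
    norm_num at hPint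
  -- key pointwise identity
  have hV : ∀ r θ : ℝ, Vact (Rot φ v) r θ = Vact v r (θ + -(φ/2)) := by
    intro r θ
    simp only [Vact, Rot]
    rw [show 2 * (θ + -(φ/2)) = 2*θ - φ by ring, Real.cos_sub, Real.sin_sub]
    ring
  -- periodicity of Vact in θ
  have hVper : ∀ r θ : ℝ, Vact v r (θ + π) = Vact v r θ := by
    intro r θ
    simp only [Vact]
    rw [show 2 * (θ + π) = 2*θ + 2*π by ring, Real.cos_add_two_pi, Real.sin_add_two_pi]
  -- continuity
  have hσc : Continuous σ := hσ.continuous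
  have hVc : Continuous fun x : ℝ × ℝ => Vact v x.1 x.2 := by unfold Vact; fun_prop
  have hg0c : Continuous fun x : ℝ × ℝ => σ (Vact v x.1 x.2) := hσc.comp hVc
  have hcos2 : Continuous fun x : ℝ × ℝ => Real.cos (2 * x.2) :=
    Real.continuous_cos.comp (continuous_const.mul continuous_snd)
  have hsin2 : Continuous fun x : ℝ × ℝ => Real.sin (2 * x.2) :=
    Real.continuous_sin.comp (continuous_const.mul continuous_snd)
  have hcosφ : Continuous fun x : ℝ × ℝ => Real.cos (2 * x.2 + φ) :=
    Real.continuous_cos.comp ((continuous_const.mul continuous_snd).add continuous_const)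
  have hsinφ : Continuous fun x : ℝ × ℝ => Real.sin (2 * x.2 + φ) :=
    Real.continuous_sin.comp ((continuous_const.mul continuous_snd).add continuous_const)
  -- bounds
  have hb0 : ∀ x : ℝ × ℝ, |σ (Vact v x.1 x.2)| ≤ 1 * (1 + |x.1|) := by
    intro x
    have h1 := hσ1 (Vact v x.1 x.2)
    have h2 := abs_nonneg x.1
    linarith
  have hbgen : ∀ (w : ℝ × ℝ → ℝ), (∀ x, |w x| ≤ 1) →
      ∀ x : ℝ × ℝ, |x.1 * w x * σ (Vact v x.1 x.2)| ≤ 1 * (1 + |x.1|) := by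
    intro w hw x
    rw [abs_mul, abs_mul]
    calc |x.1| * |w x| * |σ (Vact v x.1 x.2)| ≤ |x.1| * 1 * 1 := by
          gcongr
          · exact hw x
          · exact hσ1 _
      _ = |x.1| := by ring
      _ ≤ 1 * (1 + |x.1|) := by linarith [abs_nonneg x.1]
  -- integrability of the five integrands on all strips
  have hint0 : ∀ s t : ℝ, IntegrableOn
      (fun x : ℝ × ℝ => σ (Vact v x.1 x.2) * P x.1 / π) (Ici (0:ℝ) ×ˢ Ico s t) volume :=
    fun s t => strip_integrable _ hg0c 1 hb0 P hP0 hPsupp hPi s t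
  have hint1 : ∀ s t : ℝ, IntegrableOn
      (fun x : ℝ × ℝ => x.1 * Real.cos (2 * x.2) * σ (Vact v x.1 x.2) * P x.1 / π)
      (Ici (0:ℝ) ×ˢ Ico s t) volume :=
    fun s t => strip_integrable _ ((continuous_fst.mul hcos2).mul hg0c) 1
      (hbgen _ (fun x => Real.abs_cos_le_one _)) P hP0 hPsupp hPi s t
  have hint2 : ∀ s t : ℝ, IntegrableOn
      (fun x : ℝ × ℝ => x.1 * Real.sin (2 * x.2) * σ (Vact v x.1 x.2) * P x.1 / π)
      (Ici (0:ℝ) ×ˢ Ico s t) volume :=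
    fun s t => strip_integrable _ ((continuous_fst.mul hsin2).mul hg0c) 1
      (hbgen _ (fun x => Real.abs_sin_le_one _)) P hP0 hPsupp hPi s t
  have hintG1 : ∀ s t : ℝ, IntegrableOn
      (fun x : ℝ × ℝ => x.1 * Real.cos (2 * x.2 + φ) * σ (Vact v x.1 x.2) * P x.1 / π)
      (Ici (0:ℝ) ×ˢ Ico s t) volume :=
    fun s t => strip_integrable _ ((continuous_fst.mul hcosφ).mul hg0c) 1
      (hbgen _ (fun x => Real.abs_cos_le_one _)) P hP0 hPsupp hPi s t
  have hintG2 : ∀ s t : ℝ, IntegrableOn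
      (fun x : ℝ × ℝ => x.1 * Real.sin (2 * x.2 + φ) * σ (Vact v x.1 x.2) * P x.1 / π)
      (Ici (0:ℝ) ×ˢ Ico s t) volume :=
    fun s t => strip_integrable _ ((continuous_fst.mul hsinφ).mul hg0c) 1
      (hbgen _ (fun x => Real.abs_sin_le_one _)) P hP0 hPsupp hPi s t
  -- periodicity of the integrands
  have hper0 : ∀ r θ : ℝ, (fun x : ℝ × ℝ => σ (Vact v x.1 x.2) * P x.1 / π) (r, θ + π)
      = (fun x : ℝ × ℝ => σ (Vact v x.1 x.2) * P x.1 / π) (r, θ) := by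
    intro r θ; simp only; rw [hVper]
  have hperG1 : ∀ r θ : ℝ,
      (fun x : ℝ × ℝ => x.1 * Real.cos (2 * x.2 + φ) * σ (Vact v x.1 x.2) * P x.1 / π) (r, θ + π)
      = (fun x : ℝ × ℝ => x.1 * Real.cos (2 * x.2 + φ) * σ (Vact v x.1 x.2) * P x.1 / π) (r, θ) := by
    intro r θ; simp only
    rw [hVper, show 2 * (θ + π) + φ = (2*θ + φ) + 2*π by ring, Real.cos_add_two_pi]
  have hperG2 : ∀ r θ : ℝ,
      (fun x : ℝ × ℝ => x.1 * Real.sin (2 * x.2 + φ) * σ (Vact v x.1 x.2) * P x.1 / π) (r, θ + π)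
      = (fun x : ℝ × ℝ => x.1 * Real.sin (2 * x.2 + φ) * σ (Vact v x.1 x.2) * P x.1 / π) (r, θ) := by
    intro r θ; simp only
    rw [hVper, show 2 * (θ + π) + φ = (2*θ + φ) + 2*π by ring, Real.sin_add_two_pi]
  -- abbreviations
  have hIco : Ico (-(π/2):ℝ) (π/2) = Ico (-(π/2)) (-(π/2) + π) := by
    rw [show -(π/2) + π = π/2 by ring]
  set a : ℝ := -(π/2) with ha
  set c : ℝ := -(φ/2) with hc
  -- component 0
  have comp0 : ∫ x in Ici (0:ℝ) ×ˢ Ico a (a + π), σ (Vact (Rot φ v) x.1 x.2) * P x.1 / π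
      = ∫ x in Ici (0:ℝ) ×ˢ Ico a (a + π), σ (Vact v x.1 x.2) * P x.1 / π := by
    calc ∫ x in Ici (0:ℝ) ×ˢ Ico a (a + π), σ (Vact (Rot φ v) x.1 x.2) * P x.1 / π
        = ∫ x in Ici (0:ℝ) ×ˢ Ico a (a + π), σ (Vact v x.1 (x.2 + c)) * P x.1 / π := by
          simp only [hV]
      _ = ∫ x in Ici (0:ℝ) ×ˢ Ico (a + c) (a + π + c), σ (Vact v x.1 x.2) * P x.1 / π :=
          strip_translate (fun y : ℝ × ℝ => σ (Vact v y.1 y.2) * P y.1 / π) c a (a + π)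
      _ = ∫ x in Ici (0:ℝ) ×ˢ Ico a (a + π), σ (Vact v x.1 x.2) * P x.1 / π := by
          have := strip_const (fun y : ℝ × ℝ => σ (Vact v y.1 y.2) * P y.1 / π)
            hper0 hint0 (a + c) a
          rwa [show a + c + π = a + π + c by ring] at this
  -- component 1
  have comp1 : ∫ x in Ici (0:ℝ) ×ˢ Ico a (a + π),
        x.1 * Real.cos (2 * x.2) * σ (Vact (Rot φ v) x.1 x.2) * P x.1 / π
      = Real.cos φ * (∫ x in Ici (0:ℝ) ×ˢ Ico a (a + π),
            x.1 * Real.cos (2 * x.2) * σ (Vact v x.1 x.2) * P x.1 / π)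
        - Real.sin φ * ∫ x in Ici (0:ℝ) ×ˢ Ico a (a + π),
            x.1 * Real.sin (2 * x.2) * σ (Vact v x.1 x.2) * P x.1 / π := by
    have step1 : ∫ x in Ici (0:ℝ) ×ˢ Ico a (a + π),
          x.1 * Real.cos (2 * x.2) * σ (Vact (Rot φ v) x.1 x.2) * P x.1 / π
        = ∫ x in Ici (0:ℝ) ×ˢ Ico a (a + π),
          x.1 * Real.cos (2 * x.2 + φ) * σ (Vact v x.1 x.2) * P x.1 / π := by
      calc ∫ x in Ici (0:ℝ) ×ˢ Ico a (a + π),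
            x.1 * Real.cos (2 * x.2) * σ (Vact (Rot φ v) x.1 x.2) * P x.1 / π
          = ∫ x in Ici (0:ℝ) ×ˢ Ico a (a + π),
            x.1 * Real.cos (2 * (x.2 + c) + φ) * σ (Vact v x.1 (x.2 + c)) * P x.1 / π := by
            simp only [hV, show ∀ θ : ℝ, 2 * (θ + c) + φ = 2 * θ from fun θ => by
              rw [hc]; ring]
        _ = ∫ x in Ici (0:ℝ) ×ˢ Ico (a + c) (a + π + c),
            x.1 * Real.cos (2 * x.2 + φ) * σ (Vact v x.1 x.2) * P x.1 / π :=
            strip_translate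
              (fun y : ℝ × ℝ => y.1 * Real.cos (2 * y.2 + φ) * σ (Vact v y.1 y.2) * P y.1 / π)
              c a (a + π)
        _ = ∫ x in Ici (0:ℝ) ×ˢ Ico a (a + π),
            x.1 * Real.cos (2 * x.2 + φ) * σ (Vact v x.1 x.2) * P x.1 / π := by
            have := strip_const
              (fun y : ℝ × ℝ => y.1 * Real.cos (2 * y.2 + φ) * σ (Vact v y.1 y.2) * P y.1 / π)
              hperG1 hintG1 (a + c) a
            rwa [show a + c + π = a + π + c by ring] at this
    rw [step1]
    have hsplit : ∀ x : ℝ × ℝ,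
        x.1 * Real.cos (2 * x.2 + φ) * σ (Vact v x.1 x.2) * P x.1 / π
        = Real.cos φ * (x.1 * Real.cos (2 * x.2) * σ (Vact v x.1 x.2) * P x.1 / π)
          - Real.sin φ * (x.1 * Real.sin (2 * x.2) * σ (Vact v x.1 x.2) * P x.1 / π) := by
      intro x; rw [Real.cos_add]; ring
    simp only [hsplit]
    rw [integral_sub ((hint1 a (a + π)).const_mul _) ((hint2 a (a + π)).const_mul _),
      integral_const_mul, integral_const_mul]
  -- component 2
  have comp2 : ∫ x in Ici (0:ℝ) ×ˢ Ico a (a + π),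
        x.1 * Real.sin (2 * x.2) * σ (Vact (Rot φ v) x.1 x.2) * P x.1 / π
      = Real.sin φ * (∫ x in Ici (0:ℝ) ×ˢ Ico a (a + π),
            x.1 * Real.cos (2 * x.2) * σ (Vact v x.1 x.2) * P x.1 / π)
        + Real.cos φ * ∫ x in Ici (0:ℝ) ×ˢ Ico a (a + π),
            x.1 * Real.sin (2 * x.2) * σ (Vact v x.1 x.2) * P x.1 / π := by
    have step1 : ∫ x in Ici (0:ℝ) ×ˢ Ico a (a + π),
          x.1 * Real.sin (2 * x.2) * σ (Vact (Rot φ v) x.1 x.2) * P x.1 / π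
        = ∫ x in Ici (0:ℝ) ×ˢ Ico a (a + π),
          x.1 * Real.sin (2 * x.2 + φ) * σ (Vact v x.1 x.2) * P x.1 / π := by
      calc ∫ x in Ici (0:ℝ) ×ˢ Ico a (a + π),
            x.1 * Real.sin (2 * x.2) * σ (Vact (Rot φ v) x.1 x.2) * P x.1 / π
          = ∫ x in Ici (0:ℝ) ×ˢ Ico a (a + π),
            x.1 * Real.sin (2 * (x.2 + c) + φ) * σ (Vact v x.1 (x.2 + c)) * P x.1 / π := by
            simp only [hV, show ∀ θ : ℝ, 2 * (θ + c) + φ = 2 * θ from fun θ => by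
              rw [hc]; ring]
        _ = ∫ x in Ici (0:ℝ) ×ˢ Ico (a + c) (a + π + c),
            x.1 * Real.sin (2 * x.2 + φ) * σ (Vact v x.1 x.2) * P x.1 / π :=
            strip_translate
              (fun y : ℝ × ℝ => y.1 * Real.sin (2 * y.2 + φ) * σ (Vact v y.1 y.2) * P y.1 / π)
              c a (a + π)
        _ = ∫ x in Ici (0:ℝ) ×ˢ Ico a (a + π),
            x.1 * Real.sin (2 * x.2 + φ) * σ (Vact v x.1 x.2) * P x.1 / π := by
            have := strip_const
              (fun y : ℝ × ℝ => y.1 * Real.sin (2 * y.2 + φ) * σ (Vact v y.1 y.2) * P y.1 / π)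
              hperG2 hintG2 (a + c) a
            rwa [show a + c + π = a + π + c by ring] at this
    rw [step1]
    have hsplit : ∀ x : ℝ × ℝ,
        x.1 * Real.sin (2 * x.2 + φ) * σ (Vact v x.1 x.2) * P x.1 / π
        = Real.sin φ * (x.1 * Real.cos (2 * x.2) * σ (Vact v x.1 x.2) * P x.1 / π)
          + Real.cos φ * (x.1 * Real.sin (2 * x.2) * σ (Vact v x.1 x.2) * P x.1 / π) := by
      intro x; rw [Real.sin_add]; ring
    simp only [hsplit]
    rw [integral_add ((hint1 a (a + π)).const_mul _) ((hint2 a (a + π)).const_mul _),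
      integral_const_mul, integral_const_mul]
  -- assemble
  simp only [Psi, hIco, ← ha]
  rw [comp0, comp1, comp2]
  simp only [Rot, Prod.mk.injEq]
  refine ⟨trivial, by ring, by ring⟩
end

section
/- For every l > 0, the 4×4 real matrix P_l with entries P_l(i,j) = (−1)^{i+j} · l^{−(i+j−1)} · (i+j−2)! / ((i−1)!(j−1)!), for 1 ≤ i, j ≤ 4, is symmetric positive definite and satisfies the identity P_l A + Aᵀ P_l − Cᵀ C = −l P_l, where A is the 4×4 nilpotent shift matrix (A(i,j) = 1 if j = i+1 and 0 otherwise) and C = (1, 0, 0, 0) ∈ ℝ^{1×4}. -/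
open Matrix

/-- The high-gain Lyapunov matrix `P_l`, with 1-based entries
`P_l(i,j) = (−1)^{i+j} l^{−(i+j−1)} (i+j−2)!/((i−1)!(j−1)!)` (here indexed from 0). -/
noncomputable def Pl (l : ℝ) : Matrix (Fin 4) (Fin 4) ℝ :=
  Matrix.of fun i j : Fin 4 =>
    (-1 : ℝ) ^ ((i : ℕ) + (j : ℕ)) * l ^ (-(((i : ℕ) + (j : ℕ) + 1 : ℕ) : ℤ)) *
      (Nat.factorial ((i : ℕ) + (j : ℕ))) /
        ((Nat.factorial (i : ℕ)) * (Nat.factorial (j : ℕ)))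

/-- The 4×4 nilpotent shift matrix. -/
def Ashift : Matrix (Fin 4) (Fin 4) ℝ :=
  Matrix.of fun i j : Fin 4 => if (j : ℕ) = (i : ℕ) + 1 then 1 else 0

/-- The output row matrix `C = (1,0,0,0)`. -/
def Crow : Matrix (Fin 1) (Fin 4) ℝ := !![1, 0, 0, 0]

lemma Pl_eq (l : ℝ) : Pl l =
    !![l⁻¹, -(l⁻¹^2), l⁻¹^3, -(l⁻¹^4);
       -(l⁻¹^2), 2*l⁻¹^3, -(3*l⁻¹^4), 4*l⁻¹^5;
       l⁻¹^3, -(3*l⁻¹^4), 6*l⁻¹^5, -(10*l⁻¹^6);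
       -(l⁻¹^4), 4*l⁻¹^5, -(10*l⁻¹^6), 20*l⁻¹^7] := by
  have h3 : ((3 : Fin 4) : ℕ) = 3 := rfl
  ext i j
  fin_cases i <;> fin_cases j <;>
    simp [Pl, Nat.factorial, _root_.zpow_neg, h3] <;>
    norm_num <;> ring

lemma Ashift_eq : Ashift = !![0,1,0,0;(0:ℝ),0,1,0;0,0,0,1;0,0,0,0] := by
  ext i j
  fin_cases i <;> fin_cases j <;> rfl

lemma Ashift_transpose_eq :
    Ashiftᵀ = !![0,0,0,0;(1:ℝ),0,0,0;0,1,0,0;0,0,1,0] := by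
  ext i j
  fin_cases i <;> fin_cases j <;> rfl

lemma Crow_transpose_eq : Crowᵀ = !![1; 0; 0; 0] := by
  ext i j
  fin_cases i <;> fin_cases j <;> rfl

set_option maxHeartbeats 2000000 in
lemma lyap (l : ℝ) (hl0 : l ≠ 0) :
    Pl l * Ashift + Ashiftᵀ * Pl l - Crowᵀ * Crow = (-l) • Pl l := by
  have hsmul : (-l) • Pl l =
      !![-1, l⁻¹, -(l⁻¹^2), l⁻¹^3;
         l⁻¹, -(2*l⁻¹^2), 3*l⁻¹^3, -(4*l⁻¹^4);
         -(l⁻¹^2), 3*l⁻¹^3, -(6*l⁻¹^4), 10*l⁻¹^5;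
         l⁻¹^3, -(4*l⁻¹^4), 10*l⁻¹^5, -(20*l⁻¹^6)] := by
    rw [Pl_eq]
    have h : l * l⁻¹ = 1 := mul_inv_cancel₀ hl0
    ext i j
    fin_cases i <;> fin_cases j <;>
      simp [Matrix.smul_apply] <;> field_simp <;> ring
  rw [Ashift_transpose_eq, Ashift_eq, Crow_transpose_eq, hsmul, Pl_eq]
  ext i j
  fin_cases i <;> fin_cases j <;>
    simp [Matrix.mul_apply, Fin.sum_univ_four, Fin.sum_univ_one, Crow,
      Matrix.vecHead, Matrix.vecTail, Function.comp] <;> ring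

/-- for every `l > 0`, `P_l` is symmetric positive definite and
satisfies the Lyapunov identity `P_l A + Aᵀ P_l − Cᵀ C = −l P_l`. -/
theorem Pl_posdef_and_lyapunov (l : ℝ) (hl : 0 < l) :
    (Pl l).IsSymm ∧ (Pl l).PosDef ∧
      Pl l * Ashift + Ashiftᵀ * Pl l - Crowᵀ * Crow = (-l) • Pl l := by
  have hl0 : l ≠ 0 := hl.ne'
  have hsymm : (Pl l).IsSymm := by
    rw [Pl_eq]
    ext i j
    fin_cases i <;> fin_cases j <;> simp
  refine ⟨hsymm, posDef_iff_dotProduct_mulVec.mpr ⟨?_, ?_⟩, lyap l hl0⟩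
  · rw [Matrix.IsHermitian, conjTranspose_eq_transpose_of_trivial]
    exact hsymm
  · intro x hx
    have hinv : 0 < l⁻¹ := inv_pos.2 hl
    have key : star x ⬝ᵥ (Pl l).mulVec x =
        l⁻¹ * ((x 0 - l⁻¹ * x 1 + l⁻¹^2 * x 2 - l⁻¹^3 * x 3)^2
          + (l⁻¹ * x 1 - 2*l⁻¹^2 * x 2 + 3*l⁻¹^3 * x 3)^2
          + (l⁻¹^2 * x 2 - 3*l⁻¹^3 * x 3)^2 + (l⁻¹^3 * x 3)^2) := by
      simp [Pl_eq, dotProduct, mulVec, Fin.sum_univ_four]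
      ring
    rw [key]
    apply mul_pos hinv
    rcases eq_or_ne (x 3) 0 with h3 | h3
    · rcases eq_or_ne (x 2) 0 with h2 | h2
      · rcases eq_or_ne (x 1) 0 with h1 | h1
        · have h0 : x 0 ≠ 0 := by
            intro h0
            exact hx (funext fun i => by fin_cases i <;> assumption)
          simp only [h1, h2, h3, mul_zero, sub_zero, add_zero]
          nlinarith [pow_two_pos_of_ne_zero h0]
        · have hy : l⁻¹ * x 1 ≠ 0 := mul_ne_zero hinv.ne' h1
          simp only [h2, h3, mul_zero, sub_zero, add_zero]
          nlinarith [pow_two_pos_of_ne_zero hy, sq_nonneg (x 0 - l⁻¹ * x 1)]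
      · have hy : l⁻¹^2 * x 2 ≠ 0 := mul_ne_zero (pow_ne_zero _ hinv.ne') h2
        simp only [h3, mul_zero, sub_zero, add_zero]
        nlinarith [pow_two_pos_of_ne_zero hy,
          sq_nonneg (x 0 - l⁻¹ * x 1 + l⁻¹^2 * x 2),
          sq_nonneg (l⁻¹ * x 1 - 2*l⁻¹^2 * x 2)]
    · have hy : l⁻¹^3 * x 3 ≠ 0 := mul_ne_zero (pow_ne_zero _ hinv.ne') h3
      nlinarith [pow_two_pos_of_ne_zero hy,
        sq_nonneg (x 0 - l⁻¹ * x 1 + l⁻¹^2 * x 2 - l⁻¹^3 * x 3),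
        sq_nonneg (l⁻¹ * x 1 - 2*l⁻¹^2 * x 2 + 3*l⁻¹^3 * x 3),
        sq_nonneg (l⁻¹^2 * x 2 - 3*l⁻¹^3 * x 3)]
end
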